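/- Single-source FCFS M/M/1 age: the function Δ(ρ) = (1/μ)[ρ²/(1−ρ) + 1 + 1/ρ] on (0,1) has a unique minimizer ρ* ∈ (0,1), which is the unique root in (0,1) of ρ⁴ − 2ρ³ + ρ² − 2ρ + 1 = 0 (equivalently of the first-order condition ρ²(2−ρ)/(1−ρ)² = 1/ρ²), and ρ* ∈ (0.52, 0.54). -/

import Mathlib

noncomputable def ageFCFS1 (mu ρ : ℝ) : ℝ := (1/mu) * (ρ^2/(1-ρ) + 1 + 1/ρ)

private def Paoi (ρ : ℝ) : ℝ := ρ^4 - 2*ρ^3 + ρ^2 - 2*ρ + 1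

private lemma Paoi_hasDeriv (x : ℝ) : HasDerivAt Paoi (4*x^3 - 6*x^2 + 2*x - 2) x := by
  have h := ((((hasDerivAt_pow 4 x).sub ((hasDerivAt_pow 3 x).const_mul 2)).add
      (hasDerivAt_pow 2 x)).sub ((hasDerivAt_id x).const_mul 2)).add_const 1
  exact (h.congr_deriv (by ring)).congr_of_eventuallyEq
    (Filter.Eventually.of_forall fun y => by simp only [Paoi, Pi.add_apply, Pi.sub_apply, id])

private lemma Paoi_anti : StrictAntiOn Paoi (Set.Icc 0 1) := by
  apply strictAntiOn_of_deriv_neg (convex_Icc 0 1)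
  · exact fun x _ => (Paoi_hasDeriv x).continuousAt.continuousWithinAt
  · intro x hx
    rw [interior_Icc] at hx
    rw [(Paoi_hasDeriv x).deriv]
    nlinarith [hx.1, hx.2, sq_nonneg x, sq_nonneg (1-x)]

private noncomputable def faoi (ρ : ℝ) : ℝ := ρ^2/(1-ρ) + 1 + 1/ρ

private lemma faoi_hasDeriv {x : ℝ} (hx : x ∈ Set.Ioo (0:ℝ) 1) :
    HasDerivAt faoi (-(Paoi x) / (x^2 * (1-x)^2)) x := by
  have hx0 : x ≠ 0 := ne_of_gt hx.1
  have hx1 : (1:ℝ) - x ≠ 0 := by have := hx.2; intro h; linarith [h]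
  have h1 : HasDerivAt (fun ρ:ℝ => ρ^2/(1-ρ))
      ((2*x*(1-x) - x^2*(-1))/(1-x)^2) x := by
    have ha : HasDerivAt (fun ρ:ℝ => ρ^2) (2*x) x := by
      simpa using hasDerivAt_pow 2 x
    have hb : HasDerivAt (fun ρ:ℝ => 1-ρ) (-1) x := by
      simpa using (hasDerivAt_id x).const_sub 1
    exact ha.div hb hx1
  have h2 : HasDerivAt (fun ρ:ℝ => 1/ρ) (-(x^2)⁻¹) x := by
    simpa [one_div] using hasDerivAt_inv hx0
  have h := (h1.add_const 1).add h2
  refine h.congr_deriv ?_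
  symm
  unfold Paoi
  field_simp
  ring

private lemma faoi_min {ρs : ℝ} (hρs : ρs ∈ Set.Ioo (0:ℝ) 1) (hroot : Paoi ρs = 0)
    {ρ : ℝ} (hρ : ρ ∈ Set.Ioo (0:ℝ) 1) : faoi ρs ≤ faoi ρ := by
  rcases lt_trichotomy ρ ρs with h | h | h
  · -- f strictly decreasing on [ρ, ρs]
    have hsub : Set.Icc ρ ρs ⊆ Set.Ioo (0:ℝ) 1 :=
      fun x hx => ⟨lt_of_lt_of_le hρ.1 hx.1, lt_of_le_of_lt hx.2 hρs.2⟩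
    have : StrictAntiOn faoi (Set.Icc ρ ρs) := by
      apply strictAntiOn_of_deriv_neg (convex_Icc ρ ρs)
      · exact fun x hx => (faoi_hasDeriv (hsub hx)).continuousAt.continuousWithinAt
      · intro x hx
        rw [interior_Icc] at hx
        have hxm : x ∈ Set.Ioo (0:ℝ) 1 := hsub ⟨le_of_lt hx.1, le_of_lt hx.2⟩
        rw [(faoi_hasDeriv hxm).deriv]
        have hPpos : 0 < Paoi x := by
          have := Paoi_anti ⟨le_of_lt hxm.1, le_of_lt hxm.2⟩
            ⟨le_of_lt hρs.1, le_of_lt hρs.2⟩ hx.2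
          rw [hroot] at this; linarith
        exact div_neg_of_neg_of_pos (by linarith)
          (mul_pos (pow_pos hxm.1 2) (pow_pos (by linarith [hxm.2]) 2))
    exact le_of_lt (this (Set.left_mem_Icc.2 (le_of_lt h)) (Set.right_mem_Icc.2 (le_of_lt h)) h)
  · rw [h]
  · have hsub : Set.Icc ρs ρ ⊆ Set.Ioo (0:ℝ) 1 :=
      fun x hx => ⟨lt_of_lt_of_le hρs.1 hx.1, lt_of_le_of_lt hx.2 hρ.2⟩
    have : StrictMonoOn faoi (Set.Icc ρs ρ) := by
      apply strictMonoOn_of_deriv_pos (convex_Icc ρs ρ)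
      · exact fun x hx => (faoi_hasDeriv (hsub hx)).continuousAt.continuousWithinAt
      · intro x hx
        rw [interior_Icc] at hx
        have hxm : x ∈ Set.Ioo (0:ℝ) 1 := hsub ⟨le_of_lt hx.1, le_of_lt hx.2⟩
        rw [(faoi_hasDeriv hxm).deriv]
        have hPneg : Paoi x < 0 := by
          have := Paoi_anti ⟨le_of_lt hρs.1, le_of_lt hρs.2⟩
            ⟨le_of_lt hxm.1, le_of_lt hxm.2⟩ hx.1
          rw [hroot] at this; linarith
        exact div_pos (by linarith)
          (mul_pos (pow_pos hxm.1 2) (pow_pos (by linarith [hxm.2]) 2))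
    exact le_of_lt (this (Set.left_mem_Icc.2 (le_of_lt h)) (Set.right_mem_Icc.2 (le_of_lt h)) h)

theorem fcfs_single_source_optimum (mu : ℝ) (hmu : 0 < mu) :
    ∃! ρs : ℝ, ρs ∈ Set.Ioo (0:ℝ) 1 ∧
      (∀ ρ ∈ Set.Ioo (0:ℝ) 1, ageFCFS1 mu ρs ≤ ageFCFS1 mu ρ) ∧
      ρs^4 - 2*ρs^3 + ρs^2 - 2*ρs + 1 = 0 ∧
      (∀ ρ ∈ Set.Ioo (0:ℝ) 1, ρ^4 - 2*ρ^3 + ρ^2 - 2*ρ + 1 = 0 → ρ = ρs) ∧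
      ρs ∈ Set.Ioo (0.52:ℝ) 0.54 := by
  -- existence of root in (0.52, 0.54) via IVT
  have hcont : ContinuousOn Paoi (Set.Icc (0.52:ℝ) 0.54) :=
    fun x _ => (Paoi_hasDeriv x).continuousAt.continuousWithinAt
  have hivt := intermediate_value_Ioo' (by norm_num : (0.52:ℝ) ≤ 0.54) hcont
  have h0 : (0:ℝ) ∈ Set.Ioo (Paoi 0.54) (Paoi 0.52) := by
    constructor <;> (unfold Paoi; norm_num)
  obtain ⟨ρs, hρsmem, hρsroot⟩ := hivt h0
  have hρs01 : ρs ∈ Set.Ioo (0:ℝ) 1 := ⟨by linarith [hρsmem.1], by linarith [hρsmem.2]⟩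
  have huniq : ∀ ρ ∈ Set.Ioo (0:ℝ) 1, ρ^4 - 2*ρ^3 + ρ^2 - 2*ρ + 1 = 0 → ρ = ρs := by
    intro ρ hρ hr
    have hr' : Paoi ρ = 0 := hr
    by_contra hne
    rcases lt_or_gt_of_ne hne with h | h
    · have := Paoi_anti ⟨le_of_lt hρ.1, le_of_lt hρ.2⟩ ⟨le_of_lt hρs01.1, le_of_lt hρs01.2⟩ h
      rw [hr', hρsroot] at this; exact lt_irrefl 0 this
    · have := Paoi_anti ⟨le_of_lt hρs01.1, le_of_lt hρs01.2⟩ ⟨le_of_lt hρ.1, le_of_lt hρ.2⟩ h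
      rw [hr', hρsroot] at this; exact lt_irrefl 0 this
  refine ⟨ρs, ⟨hρs01, ?_, hρsroot, huniq, hρsmem⟩, ?_⟩
  · intro ρ hρ
    unfold ageFCFS1
    have := faoi_min hρs01 hρsroot hρ
    have h1μ : 0 < 1/mu := by positivity
    unfold faoi at this
    nlinarith [this]
  · rintro y ⟨hy01, _, hyroot, _, _⟩
    exact huniq y hy01 hyroot
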